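/- For every real number λ > 1 and every finite list of real numbers r₁, …, r_m, setting c := (λ−1)²/(20(m+2)²λ³), there exists a positive real number ξ such that the distance from ξλʲ − rᵢ to the nearest integer is at least c for every i ∈ {1,…,m} and every integer j ≥ 0. -/

import Mathlib

open MeasureTheory Finset ENNReal




lemma cube_ineq (lam : ℝ) (h : 1 ≤ lam) : 27 * (lam - 1)^2 ≤ 4 * lam^3 := by
  nlinarith [sq_nonneg (lam - 3), sq_nonneg (lam-1)]

lemma nine_ineq (lam : ℝ) (h : 1 ≤ lam) : 36 * (lam - 1)^2 ≤ lam^9 := by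
  have h0 : 0 ≤ lam - 1 := by linarith
  have hl : lam = 1 + (lam - 1) := by ring
  rw [hl]
  set mu := lam - 1
  nlinarith [pow_nonneg h0 3, pow_nonneg h0 4, pow_nonneg h0 5, pow_nonneg h0 6,
    pow_nonneg h0 7, pow_nonneg h0 8, pow_nonneg h0 9, sq_nonneg mu]

lemma eight_ineq (x : ℝ) (h : 0 ≤ x) : 70 * x^4 ≤ (1+x)^8 := by
  nlinarith [pow_nonneg h 3, pow_nonneg h 4, pow_nonneg h 5, pow_nonneg h 6,
    pow_nonneg h 7, pow_nonneg h 8, sq_nonneg x]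

lemma m_ineq (m : ℝ) (h : 0 ≤ m) : 8*m ≤ (m+2)^2 := by nlinarith [sq_nonneg (m-2)]

lemma geo_inv (lam : ℝ) (hlam : 1 < lam) (k : ℕ) :
    ∑ s ∈ Finset.Icc 1 k, 1 / lam ^ s ≤ 1 / (lam - 1) := by
  have hl0 : (0:ℝ) < lam := by linarith
  have hmu : (0:ℝ) < lam - 1 := by linarith
  have key : ∀ k : ℕ, ∑ s ∈ Finset.Icc 1 k, 1 / lam ^ s
      = (lam ^ k - 1) / ((lam - 1) * lam ^ k) := by
    intro k
    induction k with
    | zero => simp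
    | succ n ih =>
      rw [Finset.sum_Icc_succ_top (by omega : 1 ≤ n + 1), ih]
      have h1 : lam ^ n ≠ 0 := (pow_pos hl0 n).ne'
      have h2 : lam ^ (n+1) ≠ 0 := (pow_pos hl0 (n+1)).ne'
      field_simp
      ring
  rw [key k]
  rw [div_le_div_iff₀ (by positivity) hmu]
  have h3 : (1:ℝ) ≤ lam ^ k := one_le_pow₀ hlam.le
  nlinarith

lemma geo_pow (lam : ℝ) (hlam : 1 < lam) (k : ℕ) :
    ∑ s ∈ Finset.Icc 1 k, lam ^ s = lam * (lam ^ k - 1) / (lam - 1) := by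
  have hmu : (lam - 1) ≠ 0 := by intro h; nlinarith
  induction k with
  | zero => simp
  | succ n ih =>
    rw [Finset.sum_Icc_succ_top (by omega : 1 ≤ n + 1), ih]
    field_simp
    ring

lemma k_exists (lam : ℝ) (hlam : 1 < lam) (m : ℕ) :
    ∃ k : ℕ, 20 * (m:ℝ) * k + 20 ≤ lam ^ k := by
  have hmu : (0:ℝ) < lam - 1 := by linarith
  obtain ⟨q0, hq0⟩ := exists_nat_ge ((40 * (m:ℝ) + 40) / (lam - 1)^2)
  set q := q0 + 1 with hq
  refine ⟨2 * q, ?_⟩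
  have hqb : (40 * (m:ℝ) + 40) ≤ q * (lam - 1)^2 := by
    rw [div_le_iff₀ (by positivity)] at hq0
    have : (q0 : ℝ) ≤ q := by push_cast [hq]; linarith
    nlinarith
  have hq1 : (1:ℝ) ≤ q := by push_cast [hq]; linarith [(Nat.cast_nonneg q0 : (0:ℝ) ≤ (q0:ℝ))]
  have hbern : 1 + (q:ℝ) * (lam - 1) ≤ lam ^ q := by
    have h := one_add_mul_le_pow (show (-2:ℝ) ≤ lam - 1 by linarith) q
    have h2 : (1 + (lam - 1)) = lam := by ring
    rwa [h2] at h
  have hpow : ((q:ℝ) * (lam - 1))^2 ≤ lam ^ (2 * q) := by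
    rw [two_mul, pow_add, ← sq]
    have h1 : (0:ℝ) ≤ (q:ℝ) * (lam - 1) := by positivity
    calc ((q:ℝ) * (lam - 1))^2 ≤ (1 + (q:ℝ) * (lam - 1))^2 := by nlinarith
      _ ≤ (lam ^ q)^2 := by
          apply pow_le_pow_left₀ (by linarith) hbern
  have hqc : ((q:ℕ):ℝ) = (q0:ℝ) + 1 := by push_cast [hq]; ring
  push_cast
  have hfin : 20 * (m:ℝ) * (2 * q) + 20 ≤ ((q:ℝ) * (lam - 1))^2 := by
    have expand : ((q:ℝ) * (lam - 1))^2 = (q:ℝ) * ((q:ℝ) * (lam-1)^2) := by ring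
    rw [expand]
    have h1 : (q:ℝ) * ((q:ℝ)*(lam-1)^2) ≥ (q:ℝ) * (40*m+40) := by
      apply mul_le_mul_of_nonneg_left hqb (by positivity)
    nlinarith
  linarith



lemma goodStart (lam w c : ℝ) (hlam : 1 < lam) (hw : 0 < w) (hc : 0 < c)
    (m k : ℕ) (r : Fin m → ℝ)
    (hsum : (m : ℝ) * (∑ s ∈ Finset.Icc 1 k,
        ((lam ^ k * w) / lam ^ s + 2 * c + 1) * (2 * c * lam ^ s + w))
      < (lam ^ k - 1) * w)
    (A : ℝ) :
    ∃ x : ℝ, A ≤ x ∧ x + w ≤ A + lam ^ k * w ∧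
      ∀ y, x ≤ y → y ≤ x + w → ∀ s, 1 ≤ s → s ≤ k → ∀ i : Fin m, ∀ n : ℤ,
        c ≤ |y / lam ^ s - r i - n| := by
  have hlam0 : (0:ℝ) < lam := by linarith
  have hlpow : ∀ s : ℕ, (0:ℝ) < lam ^ s := fun s => pow_pos hlam0 s
  have hlk1 : (1:ℝ) ≤ lam ^ k := one_le_pow₀ hlam.le
  set B := A + lam ^ k * w with hB
  set N : ℕ → Fin m → Finset ℤ := fun s i =>
    Finset.Icc ⌈A / lam ^ s - r i - c⌉ ⌊B / lam ^ s - r i + c⌋ with hN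
  set Bad : Set ℝ := ⋃ s ∈ Finset.Icc 1 k, ⋃ i : Fin m, ⋃ n ∈ N s i,
      Set.Ioo (lam ^ s * (r i + n - c) - w) (lam ^ s * (r i + n + c)) with hBad
  -- there is a point of Icc A (B - w) not in Bad
  have hgood : ∃ x ∈ Set.Icc A (B - w), x ∉ Bad := by
    by_contra hcon
    push_neg at hcon
    have hsub : Set.Icc A (B - w) ⊆ Bad := fun x hx => hcon x hx
    have h1 : volume (Set.Icc A (B - w)) ≤ volume Bad := measure_mono hsub
    have h2 : volume Bad ≤ ENNReal.ofReal ((m : ℝ) * (∑ s ∈ Finset.Icc 1 k,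
        ((lam ^ k * w) / lam ^ s + 2 * c + 1) * (2 * c * lam ^ s + w))) := by
      have step1 : volume Bad ≤ ∑ s ∈ Finset.Icc 1 k, ∑ i : Fin m, ∑ n ∈ N s i,
          volume (Set.Ioo (lam ^ s * (r i + n - c) - w) (lam ^ s * (r i + n + c))) := by
        rw [hBad]
        refine le_trans (measure_biUnion_finset_le _ _) (Finset.sum_le_sum fun s _ => ?_)
        refine le_trans (measure_iUnion_fintype_le _ _) (Finset.sum_le_sum fun i _ => ?_)
        exact measure_biUnion_finset_le _ _
      have step2 : ∀ s ∈ Finset.Icc 1 k, ∀ i : Fin m, ∑ n ∈ N s i,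
          volume (Set.Ioo (lam ^ s * (r i + n - c) - w) (lam ^ s * (r i + n + c)))
          ≤ ENNReal.ofReal (((lam ^ k * w) / lam ^ s + 2 * c + 1) * (2 * c * lam ^ s + w)) := by
        intro s hs i
        have hlen : ∀ n : ℤ, volume (Set.Ioo (lam ^ s * (r i + n - c) - w) (lam ^ s * (r i + n + c)))
            = ENNReal.ofReal (2 * c * lam ^ s + w) := by
          intro n
          rw [Real.volume_Ioo]
          congr 1
          ring
        calc ∑ n ∈ N s i, volume (Set.Ioo (lam ^ s * (r i + n - c) - w) (lam ^ s * (r i + n + c)))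
            = ((N s i).card : ℝ≥0∞) * ENNReal.ofReal (2 * c * lam ^ s + w) := by
              rw [Finset.sum_congr rfl (fun n _ => hlen n), Finset.sum_const, nsmul_eq_mul]
          _ = ENNReal.ofReal (((N s i).card : ℝ) * (2 * c * lam ^ s + w)) := by
              rw [ENNReal.ofReal_mul (Nat.cast_nonneg _), ENNReal.ofReal_natCast]
          _ ≤ ENNReal.ofReal (((lam ^ k * w) / lam ^ s + 2 * c + 1) * (2 * c * lam ^ s + w)) := by
              apply ENNReal.ofReal_le_ofReal
              apply mul_le_mul_of_nonneg_right _ (by positivity)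
              -- card bound
              simp only [hN]
              rcases le_or_gt (⌈A / lam ^ s - r i - c⌉ : ℤ) ⌊B / lam ^ s - r i + c⌋ with hle | hlt
              · rw [Int.card_Icc]
                have h1 : ((⌊B / lam ^ s - r i + c⌋ + 1 - ⌈A / lam ^ s - r i - c⌉).toNat : ℝ)
                    = ((⌊B / lam ^ s - r i + c⌋ : ℝ) + 1 - (⌈A / lam ^ s - r i - c⌉ : ℝ)) := by
                  have hz := Int.toNat_of_nonneg (show (0:ℤ) ≤
                    ⌊B / lam ^ s - r i + c⌋ + 1 - ⌈A / lam ^ s - r i - c⌉ by omega)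
                  have hz2 := congrArg (fun z : ℤ => (z : ℝ)) hz
                  push_cast at hz2 ⊢
                  linarith
                rw [h1]
                have h2 := Int.floor_le (B / lam ^ s - r i + c)
                have h3 := Int.le_ceil (A / lam ^ s - r i - c)
                have h4 : B / lam ^ s - (A / lam ^ s) = lam ^ k * w / lam ^ s := by
                  rw [hB, div_sub_div_same]
                  congr 1
                  ring
                have h5 : (B / lam ^ s - r i + c) - (A / lam ^ s - r i - c)
                    = lam ^ k * w / lam ^ s + 2 * c := by
                  rw [← h4]; ring
                linarith
              · rw [Finset.Icc_eq_empty_of_lt hlt]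
                simp only [Finset.card_empty, Nat.cast_zero]
                have h1 : (0:ℝ) < lam ^ k * w / lam ^ s := by positivity
                linarith
      have step3 : (∑ s ∈ Finset.Icc 1 k, ∑ i : Fin m, ∑ n ∈ N s i,
          volume (Set.Ioo (lam ^ s * (r i + n - c) - w) (lam ^ s * (r i + n + c))))
          ≤ ENNReal.ofReal ((m : ℝ) * (∑ s ∈ Finset.Icc 1 k,
        ((lam ^ k * w) / lam ^ s + 2 * c + 1) * (2 * c * lam ^ s + w))) := by
        calc (∑ s ∈ Finset.Icc 1 k, ∑ i : Fin m, ∑ n ∈ N s i,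
          volume (Set.Ioo (lam ^ s * (r i + n - c) - w) (lam ^ s * (r i + n + c))))
            ≤ ∑ s ∈ Finset.Icc 1 k, ∑ _i : Fin m, ENNReal.ofReal
                (((lam ^ k * w) / lam ^ s + 2 * c + 1) * (2 * c * lam ^ s + w)) := by
              refine Finset.sum_le_sum fun s hs => Finset.sum_le_sum fun i _ => step2 s hs i
          _ = ∑ s ∈ Finset.Icc 1 k, ENNReal.ofReal ((m:ℝ) *
                (((lam ^ k * w) / lam ^ s + 2 * c + 1) * (2 * c * lam ^ s + w))) := by
              refine Finset.sum_congr rfl fun s hs => ?_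
              rw [Finset.sum_const, Finset.card_univ, Fintype.card_fin, nsmul_eq_mul,
                ENNReal.ofReal_mul (Nat.cast_nonneg m), ENNReal.ofReal_natCast]
          _ = ENNReal.ofReal (∑ s ∈ Finset.Icc 1 k, (m:ℝ) *
                (((lam ^ k * w) / lam ^ s + 2 * c + 1) * (2 * c * lam ^ s + w))) := by
              rw [ENNReal.ofReal_sum_of_nonneg]
              intro s hs
              have h1 : (0:ℝ) < lam ^ s := hlpow s
              have h2 : (0:ℝ) < lam ^ k := hlpow k
              positivity
          _ = ENNReal.ofReal ((m : ℝ) * (∑ s ∈ Finset.Icc 1 k,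
              ((lam ^ k * w) / lam ^ s + 2 * c + 1) * (2 * c * lam ^ s + w))) := by
              rw [Finset.mul_sum]
      exact le_trans step1 step3
    have h3 : volume (Set.Icc A (B - w)) = ENNReal.ofReal ((lam ^ k - 1) * w) := by
      rw [Real.volume_Icc]; congr 1; rw [hB]; ring
    rw [h3] at h1
    have h4 := h1.trans h2
    rw [ENNReal.ofReal_le_ofReal_iff] at h4
    · linarith
    · apply mul_nonneg (Nat.cast_nonneg m)
      apply Finset.sum_nonneg
      intro s hs
      have h1 : (0:ℝ) < lam ^ s := hlpow s
      have h2 : (0:ℝ) < lam ^ k := hlpow k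
      positivity
  obtain ⟨x, hx, hxbad⟩ := hgood
  refine ⟨x, hx.1, by linarith [hx.2], ?_⟩
  intro y hy1 hy2 s hs1 hs2 i n
  by_contra habs
  push_neg at habs
  rw [abs_lt] at habs
  obtain ⟨ha1, ha2⟩ := habs
  -- y ∈ (lam^s (r i + n - c), lam^s (r i + n + c))
  have hys1 : lam ^ s * (r i + n - c) < y := by
    have h := ha1
    have : lam ^ s * (r i + n - c) < lam ^ s * (y / lam ^ s) := by
      apply mul_lt_mul_of_pos_left _ (hlpow s)
      have : y / lam ^ s - r i - n > -c := ha1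
      linarith
    rwa [mul_div_cancel₀ y (ne_of_gt (hlpow s))] at this
  have hys2 : y < lam ^ s * (r i + n + c) := by
    have : lam ^ s * (y / lam ^ s) < lam ^ s * (r i + n + c) := by
      apply mul_lt_mul_of_pos_left _ (hlpow s)
      linarith
    rwa [mul_div_cancel₀ y (ne_of_gt (hlpow s))] at this
  have hxB : x + w ≤ B := by linarith [hx.2]
  have hnmem : n ∈ N s i := by
    rw [hN]
    simp only [Finset.mem_Icc]
    constructor
    · rw [Int.ceil_le]
      have hAy : A < lam ^ s * (r i + n + c) := lt_of_le_of_lt (le_trans hx.1 hy1) hys2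
      have : A / lam ^ s < r i + n + c := (div_lt_iff₀ (hlpow s)).mpr (by linarith [hAy])
      push_cast
      linarith
    · rw [Int.le_floor]
      have hyB : lam ^ s * (r i + n - c) < B := lt_of_lt_of_le hys1 (by linarith)
      have : r i + n - c < B / lam ^ s := (lt_div_iff₀ (hlpow s)).mpr (by linarith [hyB])
      push_cast
      linarith
  apply hxbad
  rw [hBad]
  refine Set.mem_biUnion (Finset.mem_Icc.mpr ⟨hs1, hs2⟩) ?_
  refine Set.mem_iUnion.mpr ⟨i, ?_⟩
  refine Set.mem_biUnion hnmem ?_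
  constructor
  · linarith
  · linarith


set_option maxHeartbeats 1000000 in
lemma k_bound (lam : ℝ) (hlam : 1 < lam) (m k : ℕ) (hm : 1 ≤ m) (c : ℝ)
    (hc : c = (lam-1)^2 / (20*((m:ℝ)+2)^2*lam^3))
    (hmin : ∀ j : ℕ, j < k → lam ^ j < 20*(m:ℝ)*j + 20) :
    2*c*(m:ℝ)*k ≤ 1/4 := by
  have hmu : (0:ℝ) < lam - 1 := by linarith
  have hl0 : (0:ℝ) < lam := by linarith
  have hm1 : (1:ℝ) ≤ (m:ℝ) := by exact_mod_cast hm
  have hm0 : (0:ℝ) ≤ (m:ℝ) := by linarith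
  have hden : (0:ℝ) < 20*((m:ℝ)+2)^2*lam^3 := by positivity
  have hgoal : 8*(lam-1)^2*(m:ℝ)*k ≤ 20*((m:ℝ)+2)^2*lam^3 → 2*c*(m:ℝ)*k ≤ 1/4 := by
    intro h
    rw [hc, show (2:ℝ) * ((lam-1)^2/(20*((m:ℝ)+2)^2*lam^3)) * m * k
      = (2*(lam-1)^2*(m:ℝ)*k) / (20*((m:ℝ)+2)^2*lam^3) by ring,
      div_le_iff₀ hden]
    nlinarith
  apply hgoal
  have h27 := cube_ineq lam hlam.le
  have h8m := m_ineq (m:ℝ) hm0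
  have key54 : 54*(m:ℝ)*(lam-1)^2 ≤ ((m:ℝ)+2)^2 * lam^3 := by
    nlinarith [mul_le_mul h8m h27 (by positivity : (0:ℝ) ≤ 27*(lam-1)^2)
      (by positivity : (0:ℝ) ≤ ((m:ℝ)+2)^2)]
  rcases le_or_gt (k:ℝ) 56 with hk56 | hk57
  · have h1 : 8*(lam-1)^2*(m:ℝ)*(k:ℝ) ≤ 448*((lam-1)^2*(m:ℝ)) := by
      nlinarith [mul_le_mul_of_nonneg_left hk56
        (by positivity : (0:ℝ) ≤ 8*(lam-1)^2*(m:ℝ))]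
    linarith
  · -- k ≥ 57
    have hk57' : (57:ℝ) ≤ k := by
      have h : (56:ℕ) < k := by exact_mod_cast hk57
      exact_mod_cast h
    have hkn : 57 ≤ k := by exact_mod_cast hk57'
    have hkpos : (0:ℝ) < (k:ℝ) := by linarith
    set q := (k-1)/8 with hq
    have h8q : 8*q ≤ k - 1 := by omega
    have hqr : ((k:ℝ) - 8) / 8 ≤ (q:ℝ) := by
      have h1 : k - 8 ≤ 8 * q := by omega
      have h5 : ((k - 8 : ℕ) : ℝ) = (k:ℝ) - 8 := by
        have h6 : (8:ℕ) ≤ k := by omega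
        push_cast [h6]; ring
      have h3 : ((k - 8 : ℕ) : ℝ) ≤ 8*(q:ℝ) := by exact_mod_cast h1
      rw [h5] at h3
      linarith
    have hq0 : (0:ℝ) ≤ (q:ℝ) := Nat.cast_nonneg q
    have hqmu : (0:ℝ) ≤ (q:ℝ)*(lam-1) := by positivity
    have hbern : 1 + (q:ℝ)*(lam-1) ≤ lam ^ q := by
      have h := one_add_mul_le_pow (show (-2:ℝ) ≤ lam - 1 by linarith) q
      have h2 : (1 + (lam - 1)) = lam := by ring
      rwa [h2] at h
    have hstep1 : 70*((q:ℝ)*(lam-1))^4 ≤ lam ^ (k-1) := by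
      calc 70*((q:ℝ)*(lam-1))^4 ≤ (1 + (q:ℝ)*(lam-1))^8 := eight_ineq _ hqmu
        _ ≤ (lam ^ q)^8 := pow_le_pow_left₀ (by linarith) hbern 8
        _ = lam ^ (8*q) := by rw [← pow_mul, mul_comm]
        _ ≤ lam ^ (k-1) := pow_le_pow_right₀ hlam.le h8q
    have hup : lam ^ (k-1) < 20*(m:ℝ)*k := by
      have h := hmin (k-1) (by omega)
      have hcast : ((k-1:ℕ):ℝ) = (k:ℝ) - 1 := by
        have h7 : (1:ℕ) ≤ k := by omega
        push_cast [h7]; ring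
      rw [hcast] at h
      nlinarith
    have hq49 : (49/456)*(k:ℝ) ≤ (q:ℝ) := by
      have h : (49/456)*(k:ℝ) ≤ ((k:ℝ) - 8)/8 := by nlinarith
      linarith
    have hqp : ((49/456)*(k:ℝ)*(lam-1))^4 ≤ ((q:ℝ)*(lam-1))^4 := by
      apply pow_le_pow_left₀ (by positivity)
      nlinarith
    have hX0 : (0:ℝ) ≤ (k:ℝ)^3*(lam-1)^4 := by positivity
    have hk4 : (1/110)*((k:ℝ)^3*(lam-1)^4)*(k:ℝ) ≤ (20*(m:ℝ))*(k:ℝ) := by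
      have e1 : ((49/456)*(k:ℝ)*(lam-1))^4 = (49^4/456^4)*(((k:ℝ)^3*(lam-1)^4)*(k:ℝ)) := by ring
      have e2 : (1/110:ℝ) ≤ 70*(49^4/456^4) := by norm_num
      have c1 : 70*((49/456)*(k:ℝ)*(lam-1))^4 ≤ 20*(m:ℝ)*(k:ℝ) := by
        calc 70*((49/456)*(k:ℝ)*(lam-1))^4 ≤ 70*((q:ℝ)*(lam-1))^4 := by linarith
          _ ≤ lam ^ (k-1) := hstep1
          _ ≤ 20*(m:ℝ)*k := hup.le
      rw [e1] at c1
      nlinarith [mul_nonneg hX0 hkpos.le]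
    have hdiv := le_of_mul_le_mul_right hk4 hkpos
    have hk3 : (k:ℝ)^3*(lam-1)^4 ≤ 2200*(m:ℝ) := by linarith
    -- k ≤ D
    set D : ℝ := 5*((m:ℝ)+2)^2*lam^3/(2*(m:ℝ)*(lam-1)^2) with hD
    have hDpos : 0 < D := by positivity
    have hcube : (k:ℝ)^3 ≤ D^3 := by
      rw [hD, div_pow, le_div_iff₀ (by positivity)]
      have h36 := nine_ineq lam hlam.le
      have hm4 : 9*(m:ℝ)^4 ≤ ((m:ℝ)+2)^6 := by
        nlinarith [pow_nonneg hm0 4, sq_nonneg ((m:ℝ)+2), pow_le_pow_left₀ hm0 (by linarith : (m:ℝ) ≤ (m:ℝ)+2) 4]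
      have hstep : (k:ℝ)^3 * (2*(m:ℝ)*(lam-1)^2)^3 ≤ 17600*(m:ℝ)^4*(lam-1)^2 := by
        have hexp2 : (k:ℝ)^3 * (2*(m:ℝ)*(lam-1)^2)^3
            = ((k:ℝ)^3*(lam-1)^4)*(8*(m:ℝ)^3*(lam-1)^2) := by ring
        rw [hexp2]
        have h8pos : (0:ℝ) ≤ 8*(m:ℝ)^3*(lam-1)^2 := by positivity
        nlinarith [mul_le_mul_of_nonneg_right hk3 h8pos]
      have hstep2 : 17600*(m:ℝ)^4*(lam-1)^2 ≤ 125*((m:ℝ)+2)^6*lam^9 := by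
        have t1 : 17600*(m:ℝ)^4*(lam-1)^2 ≤ (17600/36)*(m:ℝ)^4*lam^9 := by
          nlinarith [pow_nonneg hm0 4]
        have t2 : (17600/36)*(m:ℝ)^4*lam^9 ≤ (17600/(36*9))*(((m:ℝ)+2)^6*lam^9) := by
          have hl9 : (0:ℝ) ≤ lam^9 := by positivity
          nlinarith [mul_le_mul_of_nonneg_right hm4 hl9]
        have hmm : (0:ℝ) ≤ ((m:ℝ)+2)^6*lam^9 := by positivity
        nlinarith
      calc (k:ℝ)^3 * (2*(m:ℝ)*(lam-1)^2)^3 ≤ 17600*(m:ℝ)^4*(lam-1)^2 := hstep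
        _ ≤ 125*((m:ℝ)+2)^6*lam^9 := hstep2
        _ = (5*((m:ℝ)+2)^2*lam^3)^3 := by ring
    have hkD : (k:ℝ) ≤ D := le_of_pow_le_pow_left₀ (by norm_num) hDpos.le hcube
    rw [hD, le_div_iff₀ (by positivity)] at hkD
    nlinarith [hkD]


set_option maxHeartbeats 1000000 in
lemma numeric_main (lam : ℝ) (hlam : 1 < lam) (m k : ℕ) (hm : 1 ≤ m) (c w : ℝ)
    (hc : c = (lam-1)^2 / (20*((m:ℝ)+2)^2*lam^3))
    (hw : w = 2*(lam-1) / (7*(m:ℝ)))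
    (hP : 20*(m:ℝ)*k + 20 ≤ lam ^ k)
    (hcmk : 2*c*(m:ℝ)*k ≤ 1/4) :
    (m : ℝ) * (∑ s ∈ Finset.Icc 1 k,
        ((lam ^ k * w) / lam ^ s + 2 * c + 1) * (2 * c * lam ^ s + w))
      < (lam ^ k - 1) * w := by
  have hmu : (0:ℝ) < lam - 1 := by linarith
  have hl0 : (0:ℝ) < lam := by linarith
  have hm1 : (1:ℝ) ≤ (m:ℝ) := by exact_mod_cast hm
  have hm0 : (0:ℝ) < (m:ℝ) := by linarith
  have hw0 : 0 < w := by rw [hw]; positivity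
  have hc0 : 0 < c := by rw [hc]; positivity
  have hk1 : 1 ≤ k := by
    by_contra hk0
    have hz : k = 0 := by omega
    rw [hz] at hP
    push_cast at hP
    norm_num at hP
  have hk1' : (1:ℝ) ≤ (k:ℝ) := by exact_mod_cast hk1
  set P := lam ^ k with hPdef
  have hP40 : (40:ℝ) ≤ P := by nlinarith
  have hP1 : (1:ℝ) < P := by linarith
  have hPm : (0:ℝ) ≤ P - 1 := by linarith
  have hc1000 : c ≤ 1/1000 := by
    rw [hc, div_le_iff₀ (by positivity)]
    have h27 := cube_ineq lam hlam.le
    have h9 : (9:ℝ) ≤ ((m:ℝ)+2)^2 := by nlinarith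
    nlinarith [pow_pos hl0 3,
      mul_le_mul h9 h27 (by positivity : (0:ℝ) ≤ 27*(lam-1)^2)
        (by positivity : (0:ℝ) ≤ ((m:ℝ)+2)^2)]
  have hc20 : 20*c*(m:ℝ)^2*lam ≤ (lam-1)^2 := by
    rw [hc]
    rw [show 20*((lam-1)^2/(20*((m:ℝ)+2)^2*lam^3))*(m:ℝ)^2*lam
      = (lam-1)^2 * ((m:ℝ)^2/(((m:ℝ)+2)^2*lam^2)) by field_simp]
    have h1 : (m:ℝ)^2 ≤ ((m:ℝ)+2)^2*lam^2 := by nlinarith [sq_nonneg (m:ℝ)]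
    have h2 : (m:ℝ)^2/(((m:ℝ)+2)^2*lam^2) ≤ 1 := by
      rw [div_le_one (by positivity)]; exact h1
    nlinarith [sq_nonneg (lam-1)]
  -- expand the sum
  have hterm : ∀ s ∈ Finset.Icc 1 k, ((P * w) / lam ^ s + 2*c + 1) * (2*c*lam^s + w)
      = (2*c*P*w + (2*c+1)*w) + (P*w^2*(1/lam^s) + 2*c*(2*c+1)*lam^s) := by
    intro s _
    have hs0 : lam ^ s ≠ 0 := (pow_pos hl0 s).ne'
    field_simp
    ring
  have hsum_eq : (∑ s ∈ Finset.Icc 1 k, ((P * w) / lam ^ s + 2*c + 1) * (2*c*lam^s + w))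
      = (k:ℝ)*(2*c*P*w + (2*c+1)*w) + P*w^2*(∑ s ∈ Finset.Icc 1 k, 1/lam^s)
        + 2*c*(2*c+1)*(∑ s ∈ Finset.Icc 1 k, lam^s) := by
    rw [Finset.sum_congr rfl hterm]
    simp only [Finset.sum_add_distrib, Finset.sum_const, Nat.card_Icc, nsmul_eq_mul]
    rw [← Finset.mul_sum, ← Finset.mul_sum]
    push_cast
    ring
  rw [hsum_eq, geo_pow lam hlam k]
  have hSinv := geo_inv lam hlam k
  have hSinv0 : 0 ≤ ∑ s ∈ Finset.Icc 1 k, 1/lam^s := by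
    apply Finset.sum_nonneg; intro s _; positivity
  -- (a)
  have ha : (m:ℝ)*((k:ℝ)*(2*c*P*w)) ≤ (26/100)*((P-1)*w) := by
    have h1 : (m:ℝ)*((k:ℝ)*(2*c*P*w)) = (2*c*(m:ℝ)*(k:ℝ))*(P*w) := by ring
    rw [h1]
    have h2 : (2*c*(m:ℝ)*(k:ℝ))*(P*w) ≤ (1/4)*(P*w) :=
      mul_le_mul_of_nonneg_right hcmk (by positivity)
    nlinarith [hw0]
  -- (d)
  have hd : (m:ℝ)*((k:ℝ)*((2*c+1)*w)) ≤ (6/100)*((P-1)*w) := by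
    have hK0 : (0:ℝ) ≤ (m:ℝ)*(k:ℝ) := by positivity
    have h1 : (2*c+1)*((m:ℝ)*(k:ℝ)) ≤ (6/100)*(P-1) := by
      have h2 : (2*c+1)*((m:ℝ)*(k:ℝ)) ≤ (501/500)*((m:ℝ)*(k:ℝ)) := by nlinarith
      nlinarith
    have := mul_le_mul_of_nonneg_right h1 hw0.le
    nlinarith
  -- (b)
  have hb : (m:ℝ)*(P*w^2*(∑ s ∈ Finset.Icc 1 k, 1/lam^s)) ≤ (30/100)*((P-1)*w) := by
    have h1 : (m:ℝ)*(P*w^2*(∑ s ∈ Finset.Icc 1 k, 1/lam^s)) ≤ (m:ℝ)*(P*w^2*(1/(lam-1))) := by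
      apply mul_le_mul_of_nonneg_left _ hm0.le
      apply mul_le_mul_of_nonneg_left hSinv (by positivity)
    have h2 : (m:ℝ)*(P*w^2*(1/(lam-1))) = (2/7)*(P*w) := by
      rw [hw]; field_simp
    nlinarith [hw0]
  -- (c)
  have hcc : (m:ℝ)*(2*c*(2*c+1)*(lam*(P-1)/(lam-1))) ≤ (36/100)*((P-1)*w) := by
    have hcm2 : c*(m:ℝ)^2*lam ≤ (lam-1)^2/20 := by linarith
    have hpos : (0:ℝ) ≤ c*(m:ℝ)^2*lam := by positivity
    have key : 14*c*(2*c+1)*(m:ℝ)^2*lam ≤ (72/100)*(lam-1)^2 := by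
      have h1 : (2*c+1) ≤ 501/500 := by linarith
      nlinarith [mul_le_mul_of_nonneg_right h1 hpos]
    have e : (m:ℝ)*(2*c*(2*c+1)*(lam*(P-1)/(lam-1)))
        = (14*c*(2*c+1)*(m:ℝ)^2*lam) * ((P-1)/((lam-1)*(7*(m:ℝ)))) := by
      field_simp
      ring
    have e2 : (36/100)*((P-1)*w) = ((72/100)*(lam-1)^2) * ((P-1)/((lam-1)*(7*(m:ℝ)))) := by
      rw [hw]; field_simp; ring
    rw [e, e2]
    exact mul_le_mul_of_nonneg_right key (div_nonneg hPm (by positivity))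
  have hfinal : (0:ℝ) < (P-1)*w := by nlinarith
  nlinarith [ha, hb, hcc, hd]


/-- Effective version with explicit constant c = (λ−1)²/(20(m+2)²λ³). -/
theorem stmt1 (lam : ℝ) (hlam : 1 < lam) (m : ℕ) (r : Fin m → ℝ) :
    ∃ ξ : ℝ, 0 < ξ ∧
      ∀ (i : Fin m) (j : ℕ) (n : ℤ),
        (lam - 1) ^ 2 / (20 * ((m : ℝ) + 2) ^ 2 * lam ^ 3) ≤ |ξ * lam ^ j - r i - n| := by
  classical
  rcases Nat.eq_zero_or_pos m with hm0 | hm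
  · subst hm0
    exact ⟨1, one_pos, fun i => absurd i.isLt (by omega)⟩
  · have hmu : (0:ℝ) < lam - 1 := by linarith
    have hl0 : (0:ℝ) < lam := by linarith
    have hm1 : (1:ℝ) ≤ (m:ℝ) := by exact_mod_cast hm
    set c : ℝ := (lam-1)^2 / (20*((m:ℝ)+2)^2*lam^3) with hc
    set w : ℝ := 2*(lam-1) / (7*(m:ℝ)) with hw
    have hc0 : 0 < c := by rw [hc]; positivity
    have hw0 : 0 < w := by rw [hw]; positivity
    have hex := k_exists lam hlam m
    set k := Nat.find hex with hkdef
    have hk : 20 * (m:ℝ) * k + 20 ≤ lam ^ k := Nat.find_spec hex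
    have hmin : ∀ j : ℕ, j < k → lam ^ j < 20*(m:ℝ)*j + 20 := by
      intro j hj
      have := Nat.find_min hex hj
      push_neg at this
      exact this
    have hk1 : 1 ≤ k := by
      rcases Nat.eq_zero_or_pos k with h0 | h1
      · exfalso
        rw [h0] at hk
        push_cast at hk
        norm_num at hk
      · exact h1
    have hcmk := k_bound lam hlam m k hm c hc hmin
    have hnum := numeric_main lam hlam m k hm c w hc hw hk hcmk
    have hgs := goodStart lam w c hlam hw0 hc0 m k r hnum
    -- block lemma
    have block : ∀ (p : ℕ) (a : ℝ), ∃ a', a ≤ a' ∧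
        a' + w / lam ^ ((p+1)*k) ≤ a + w / lam ^ (p*k) ∧
        ∀ ξ, a' ≤ ξ → ξ ≤ a' + w / lam ^ ((p+1)*k) →
          ∀ t, p*k ≤ t → t < (p+1)*k → ∀ i : Fin m, ∀ n : ℤ,
            c ≤ |ξ * lam ^ t - r i - n| := by
      intro p a
      obtain ⟨x, hx1, hx2, hx3⟩ := hgs (a * lam ^ ((p+1)*k))
      have hΛ0 : (0:ℝ) < lam ^ ((p+1)*k) := pow_pos hl0 _
      have hΛe : lam ^ ((p+1)*k) = lam ^ (p*k) * lam ^ k := by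
        rw [← pow_add]; congr 1; ring
      refine ⟨x / lam ^ ((p+1)*k), ?_, ?_, ?_⟩
      · rw [le_div_iff₀ hΛ0]; exact hx1
      · have e : a + w / lam ^ (p*k) = (a * lam ^ ((p+1)*k) + lam ^ k * w) / lam ^ ((p+1)*k) := by
          rw [hΛe]
          have h1 : lam ^ (p*k) ≠ 0 := (pow_pos hl0 _).ne'
          have h2 : lam ^ k ≠ 0 := (pow_pos hl0 _).ne'
          field_simp
        rw [e, ← add_div, div_le_div_iff₀ hΛ0 hΛ0]
        nlinarith [hx2, hΛ0]
      · intro ξ h1 h2 t ht1 ht2 i n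
        have hts : t + ((p+1)*k - t) = (p+1)*k := by omega
        set s := (p+1)*k - t with hsdef
        have hs1 : 1 ≤ s := by omega
        have hs2 : s ≤ k := by
          have hpk : (p+1)*k = p*k + k := by ring
          omega
        have hy1 : x ≤ ξ * lam ^ ((p+1)*k) := by
          rw [div_le_iff₀ hΛ0] at h1
          linarith
        have hy2 : ξ * lam ^ ((p+1)*k) ≤ x + w := by
          have h3 : ξ ≤ (x + w) / lam ^ ((p+1)*k) := by
            rwa [← add_div] at h2
          rw [le_div_iff₀ hΛ0] at h3
          linarith
        have key := hx3 (ξ * lam ^ ((p+1)*k)) hy1 hy2 s hs1 hs2 i n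
        have hconv : ξ * lam ^ ((p+1)*k) / lam ^ s = ξ * lam ^ t := by
          rw [← hts, pow_add]
          have h4 : lam ^ s ≠ 0 := (pow_pos hl0 _).ne'
          field_simp
        rwa [hconv] at key
    -- recursive construction
    let F : ℕ → ℝ := fun p => Nat.rec 1 (fun p ih => (block p ih).choose) p
    have hFstep : ∀ p, F (p+1) = (block p (F p)).choose := fun p => rfl
    have hspec : ∀ p, F p ≤ F (p+1) ∧
        F (p+1) + w / lam ^ ((p+1)*k) ≤ F p + w / lam ^ (p*k) ∧
        ∀ ξ, F (p+1) ≤ ξ → ξ ≤ F (p+1) + w / lam ^ ((p+1)*k) →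
          ∀ t, p*k ≤ t → t < (p+1)*k → ∀ i : Fin m, ∀ n : ℤ,
            c ≤ |ξ * lam ^ t - r i - n| := by
      intro p
      rw [hFstep p]
      exact (block p (F p)).choose_spec
    set G : ℕ → ℝ := fun p => F p + w / lam ^ (p*k) with hG
    have hFG : ∀ p, F p ≤ G p := by
      intro p
      have : (0:ℝ) < w / lam ^ (p*k) := by positivity
      simp only [hG]
      linarith
    have hmono : ∀ p q, p ≤ q → F p ≤ F q := by
      intro p q hpq
      induction q, hpq using Nat.le_induction with
      | base => exact le_rfl
      | succ n hn ih => exact le_trans ih (hspec n).1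
    have hanti : ∀ p q, p ≤ q → G q ≤ G p := by
      intro p q hpq
      induction q, hpq using Nat.le_induction with
      | base => exact le_rfl
      | succ n hn ih => exact le_trans (hspec n).2.1 ih
    have hbdd : BddAbove (Set.range F) := by
      refine ⟨G 0, ?_⟩
      rintro y ⟨q, rfl⟩
      exact le_trans (hFG q) (hanti 0 q (Nat.zero_le q))
    set ξ := ⨆ p, F p with hξ
    have hle : ∀ p, F p ≤ ξ := fun p => le_ciSup hbdd p
    have hub : ∀ p, ξ ≤ G p := by
      intro p
      apply ciSup_le
      intro q
      rcases le_total p q with h | h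
      · exact le_trans (hFG q) (hanti p q h)
      · exact le_trans (hmono q p h) (hFG p)
    have hF0 : F 0 = 1 := rfl
    have h01 : (1:ℝ) ≤ ξ := by
      have h := hle 0
      rwa [hF0] at h
    refine ⟨ξ, by linarith, ?_⟩
    intro i t n
    have hk0 : 0 < k := hk1
    have hp1 : (t / k) * k ≤ t := Nat.div_mul_le_self t k
    have hp2 : t < (t / k + 1) * k := by
      have h1 := Nat.div_add_mod t k
      have h2 := Nat.mod_lt t hk0
      have e1 : (t/k+1)*k = (t/k)*k + k := by ring
      have e2 : k*(t/k) = (t/k)*k := Nat.mul_comm _ _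
      omega
    have := (hspec (t/k)).2.2 ξ (hle (t/k+1)) (hub (t/k+1)) t hp1 hp2 i n
    exact this
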